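/- The formulas [A₁, A₂] = A₁∘A₂, [λ, A₂] = −λA₂, [a, A₂] = −A₂∘L_a (for A₁ ∈ gl_{n−1}(ℍ), A₂ ∈ Hom_ℍ(ℍ, ℍ^{n−1}), λ ∈ ℝ, a ∈ sp₁, L_a left multiplication by a on ℍ), together with the standard brackets of gl_{n−1}(ℍ) and sp₁ and all other brackets zero, define a Lie algebra structure on (gl_{n−1}(ℍ) ⋉ Hom_ℍ(ℍ, ℍ^{n−1})) ⋊ (ℝ ⊕ sp₁) (i.e., the Jacobi identity holds). -/

import Mathlib

open scoped Quaternion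

/-- Carrier of `(gl_{m}(ℍ) ⋉ Hom_ℍ(ℍ, ℍ^m)) ⋊ (ℝ ⊕ sp₁)`: right-ℍ-linear maps of `ℍ^m`
are identified with `m × m` quaternionic matrices (acting by left multiplication) and
`Hom_ℍ(ℍ, ℍ^m) ≅ ℍ^m` via `f ↦ f(1)`; `sp₁ = Im ℍ` sits inside the quaternion factor. -/
abbrev glHomRSp (m : ℕ) :=
  Matrix (Fin m) (Fin m) ℍ[ℝ] × (Fin m → ℍ[ℝ]) × ℝ × ℍ[ℝ]

/-- The bracket: standard brackets on `gl_m(ℍ)` and `sp₁`, `[A₁, A₂] = A₁ ∘ A₂`,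
`[λ, A₂] = −λ A₂`, `[a, A₂] = −A₂ ∘ L_a` (which under `A₂ ↦ A₂(1)` is
`u ↦ −(u · a)` componentwise), and all other brackets zero. -/
noncomputable def glBr {m : ℕ} (x y : glHomRSp m) : glHomRSp m :=
  (x.1 * y.1 - y.1 * x.1,
    x.1.mulVec y.2.1 - y.1.mulVec x.2.1 - x.2.2.1 • y.2.1 + y.2.2.1 • x.2.1
      - (fun i => y.2.1 i * x.2.2.2) + (fun i => x.2.1 i * y.2.2.2),
    0,
    x.2.2.2 * y.2.2.2 - y.2.2.2 * x.2.2.2)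

lemma mulVec_mulRight {m : ℕ} (M : Matrix (Fin m) (Fin m) ℍ[ℝ]) (v : Fin m → ℍ[ℝ])
    (a : ℍ[ℝ]) : M.mulVec (fun i => v i * a) = fun j => M.mulVec v j * a := by
  funext j
  simp [Matrix.mulVec, dotProduct, Finset.sum_mul, mul_assoc]

set_option maxHeartbeats 1600000 in
/-- The above bracket (with the `sp₁`-components constrained to be
imaginary) defines a Lie algebra structure: it is closed on imaginary `sp₁`-components,
antisymmetric, and satisfies the Jacobi identity. -/
theorem glHomRSp_bracket_is_lie_algebra (m : ℕ) :
    (∀ x y : glHomRSp m, x.2.2.2.re = 0 → y.2.2.2.re = 0 → (glBr x y).2.2.2.re = 0) ∧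
    (∀ x y : glHomRSp m, glBr x y = -glBr y x) ∧
    (∀ x y z : glHomRSp m, x.2.2.2.re = 0 → y.2.2.2.re = 0 → z.2.2.2.re = 0 →
      glBr x (glBr y z) + glBr y (glBr z x) + glBr z (glBr x y) = 0) := by
  refine ⟨?_, ?_, ?_⟩
  · rintro ⟨A, u, t, a⟩ ⟨B, v, s, b⟩ _ _
    simp only [glBr, Quaternion.re_sub, Quaternion.re_mul]
    ring
  · rintro ⟨A, u, t, a⟩ ⟨B, v, s, b⟩
    simp only [glBr, Prod.neg_mk, Prod.mk.injEq]
    refine ⟨by noncomm_ring, ?_, by simp, by noncomm_ring⟩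
    funext i
    simp only [Pi.neg_apply, Pi.add_apply, Pi.sub_apply, Pi.smul_apply]
    ext <;> simp [Quaternion.re_mul] <;> ring
  · rintro ⟨A, u, t, a⟩ ⟨B, v, s, b⟩ ⟨C, w, r, c⟩ _ _ _
    simp only [glBr, Prod.mk_add_mk, Prod.mk_eq_zero]
    refine ⟨by noncomm_ring, ?_, by simp, by noncomm_ring⟩
    simp only [Matrix.mulVec_sub, Matrix.mulVec_add, Matrix.sub_mulVec, Matrix.add_mulVec,
      Matrix.mulVec_smul, mulVec_mulRight, ← Matrix.mulVec_mulVec, zero_smul, smul_sub,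
      smul_add, smul_smul]
    funext i
    simp only [Pi.add_apply, Pi.sub_apply, Pi.smul_apply, Pi.zero_apply, zero_smul,
      add_zero, sub_zero, zero_add, smul_zero]
    ext <;> simp [Quaternion.re_mul] <;> ring
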